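/- The within-group part of the two-way fixed-effects numerator equals a weighted sum of within-group covariances between post-minus-pre outcome changes and the dose: 𝒯^{−1}·Σ_{t=1}^{𝒯} Σ_{g=2}^{𝒯+1} E[(D − E[D | G = g])·Y_t·1{G = g}]·v(g, t) = Σ_{g=2}^{𝒯} (1 − Ḡ_g)·Ḡ_g·Cov(Ȳ^{POST(g)} − Ȳ^{PRE(g)}, D | G = g)·p_g. -/

import Mathlib

open MeasureTheory

/-- Conditional expectation of `X` given the event `A`: `E[X | A] = E[X·1_A] / P(A)`. -/
noncomputable def cExp {Ω : Type*} [MeasurableSpace Ω] (P : Measure Ω)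
    (X : Ω → ℝ) (A : Set Ω) : ℝ :=
  (∫ ω in A, X ω ∂P) / (P A).toReal

/-- Fraction of periods that group `g` spends treated: `Ḡ_g = (T − g + 1)/T` for
`g ∈ {2,…,T}` and `Ḡ_{T+1} = 0`. -/
noncomputable def gBar (T g : ℕ) : ℝ :=
  if g = T + 1 then 0 else ((T : ℝ) - (g : ℝ) + 1) / (T : ℝ)

/-- `v(g, t) = 1{t ≥ g} − Ḡ_g` for `g ∈ {2,…,T}` and `v(T+1, t) = 0`. -/
noncomputable def vW (T g t : ℕ) : ℝ :=
  if g = T + 1 then 0 else (if g ≤ t then 1 else 0) - gBar T g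

/-- Conditional covariance: `Cov(X, Z | A) = E[X·Z | A] − E[X | A]·E[Z | A]`. -/
noncomputable def cCov {Ω : Type*} [MeasurableSpace Ω] (P : Measure Ω)
    (X Z : Ω → ℝ) (A : Set Ω) : ℝ :=
  cExp P (fun ω => X ω * Z ω) A - cExp P X A * cExp P Z A

/-- The within-group part of the TWFE numerator equals a weighted sum of
within-group covariances between post-minus-pre outcome changes and the dose:
`T⁻¹·Σ_{t=1}^{T} Σ_{g=2}^{T+1} E[(D − E[D|G=g])·Y_t·1{G=g}]·v(g,t)
  = Σ_{g=2}^{T} (1 − Ḡ_g)·Ḡ_g·Cov(Ȳ^{POST(g)} − Ȳ^{PRE(g)}, D | G = g)·p_g`. -/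
theorem twfe_within_group_numerator
    {Ω : Type*} [MeasurableSpace Ω] (P : Measure Ω) [IsProbabilityMeasure P]
    (T : ℕ) (hT : 2 ≤ T)
    (Dpos : Finset ℝ) (hDposNe : Dpos.Nonempty) (hDposPos : ∀ d ∈ Dpos, (0 : ℝ) < d)
    (D : Ω → ℝ) (hD : Measurable D) (hDi : Integrable D P)
    (G : Ω → ℕ) (hG : Measurable G)
    (hGrange : ∀ ω, 2 ≤ G ω ∧ G ω ≤ T + 1)
    (hDval : ∀ ω, D ω = 0 ∨ D ω ∈ Dpos)
    (hD0G : ∀ ω, D ω = 0 ↔ G ω = T + 1)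
    (hpNever : 0 < P {ω | G ω = T + 1})
    (hpgd : ∀ g : ℕ, 2 ≤ g → g ≤ T → ∀ d ∈ Dpos, 0 < P {ω | G ω = g ∧ D ω = d})
    (Y : ℕ → Ω → ℝ) (hYm : ∀ t, Measurable (Y t)) (hYi : ∀ t, Integrable (Y t) P) :
    (1 / (T : ℝ)) * ∑ t ∈ Finset.Icc 1 T, ∑ g ∈ Finset.Icc 2 (T + 1),
        (∫ ω in {ω | G ω = g}, (D ω - cExp P D {ω' | G ω' = g}) * Y t ω ∂P) * vW T g t =
      ∑ g ∈ Finset.Icc 2 T,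
        (1 - gBar T g) * gBar T g *
          cCov P
            (fun ω => ((T : ℝ) - (g : ℝ) + 1)⁻¹ * ∑ s ∈ Finset.Icc g T, Y s ω -
              ((g : ℝ) - 1)⁻¹ * ∑ s ∈ Finset.Icc 1 (g - 1), Y s ω)
            D {ω | G ω = g} *
          (P {ω | G ω = g}).toReal := by
  classical
  obtain ⟨d0, hd0⟩ := hDposNe
  set C : ℝ := max 0 (Dpos.sup' ⟨d0, hd0⟩ (fun d => |d|)) with hC
  have hDbd : ∀ ω, |D ω| ≤ C := by
    intro ω
    rcases hDval ω with h | h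
    · rw [h, abs_zero]; exact le_max_left _ _
    · exact le_max_of_le_right (Finset.le_sup' (fun d => |d|) h)
  have hDY : ∀ t, Integrable (fun ω => D ω * Y t ω) P := fun t =>
    (hYi t).bdd_mul (c := C) hD.aestronglyMeasurable (Filter.Eventually.of_forall fun ω => by
      rw [Real.norm_eq_abs]; exact hDbd ω)
  have hIcc : Finset.Icc 2 (T + 1) = insert (T + 1) (Finset.Icc 2 T) := by
    ext x; simp only [Finset.mem_Icc, Finset.mem_insert]; omega
  have hv0 : ∀ t, vW T (T + 1) t = 0 := fun t => by simp [vW]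
  rw [Finset.sum_comm, hIcc, Finset.sum_insert (by simp)]
  simp only [hv0, mul_zero, Finset.sum_const_zero, zero_add]
  rw [Finset.mul_sum]
  refine Finset.sum_congr rfl (fun g hg => ?_)
  rw [Finset.mem_Icc] at hg
  obtain ⟨hg2, hgT⟩ := hg
  set A : Set Ω := {ω | G ω = g} with hAdef
  have hPA : 0 < P A :=
    lt_of_lt_of_le (hpgd g hg2 hgT d0 hd0) (measure_mono (fun ω h => h.1))
  set p : ℝ := (P A).toReal with hpdef
  have hp0 : p ≠ 0 := ENNReal.toReal_ne_zero.mpr ⟨hPA.ne', measure_ne_top P A⟩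
  set c : ℝ := ∫ ω in A, D ω ∂P with hcdef
  have hμ : cExp P D A = c / p := rfl
  set a : ℕ → ℝ := fun t => ∫ ω in A, D ω * Y t ω ∂P with ha
  set b : ℕ → ℝ := fun t => ∫ ω in A, Y t ω ∂P with hb
  have hI : ∀ t, (∫ ω in A, (D ω - cExp P D A) * Y t ω ∂P)
      = a t - (c / p) * b t := by
    intro t
    simp only [hμ, sub_mul]
    rw [integral_sub ((hDY t).restrict) (((hYi t).restrict).const_mul (c / p)),
      integral_const_mul]
  set al : ℝ := ((T : ℝ) - (g : ℝ) + 1)⁻¹ with hal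
  set be : ℝ := ((g : ℝ) - 1)⁻¹ with hbe
  set Po := Finset.Icc g T with hPo
  set Pr := Finset.Icc 1 (g - 1) with hPr
  have hun : Finset.Icc 1 T = Pr ∪ Po := by
    ext x; simp only [hPr, hPo, Finset.mem_Icc, Finset.mem_union]; omega
  have hdisj : Disjoint Pr Po := by
    rw [Finset.disjoint_left]
    intro x hx hx'
    simp only [hPr, hPo, Finset.mem_Icc] at hx hx'
    omega
  have hZD : (∫ ω in A, ((al * ∑ s ∈ Po, Y s ω - be * ∑ s ∈ Pr, Y s ω) * D ω) ∂P)
      = al * ∑ s ∈ Po, a s - be * ∑ s ∈ Pr, a s := by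
    have h1 : ∀ ω, (al * ∑ s ∈ Po, Y s ω - be * ∑ s ∈ Pr, Y s ω) * D ω
        = al * ∑ s ∈ Po, D ω * Y s ω - be * ∑ s ∈ Pr, D ω * Y s ω := by
      intro ω; rw [← Finset.mul_sum, ← Finset.mul_sum]; ring
    simp only [h1]
    rw [integral_sub ((integrable_finset_sum _ (fun s _ => (hDY s).restrict)).const_mul al)
        ((integrable_finset_sum _ (fun s _ => (hDY s).restrict)).const_mul be),
      integral_const_mul, integral_const_mul,
      integral_finset_sum _ (fun s _ => (hDY s).restrict),
      integral_finset_sum _ (fun s _ => (hDY s).restrict)]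
  have hZ : (∫ ω in A, (al * ∑ s ∈ Po, Y s ω - be * ∑ s ∈ Pr, Y s ω) ∂P)
      = al * ∑ s ∈ Po, b s - be * ∑ s ∈ Pr, b s := by
    rw [integral_sub ((integrable_finset_sum _ (fun s _ => (hYi s).restrict)).const_mul al)
        ((integrable_finset_sum _ (fun s _ => (hYi s).restrict)).const_mul be),
      integral_const_mul, integral_const_mul,
      integral_finset_sum _ (fun s _ => (hYi s).restrict),
      integral_finset_sum _ (fun s _ => (hYi s).restrict)]
  have hgne : g ≠ T + 1 := by omega
  have hgB : gBar T g = ((T : ℝ) - (g : ℝ) + 1) / (T : ℝ) := by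
    rw [gBar, if_neg hgne]
  have hvW : ∀ t, vW T g t
      = (if g ≤ t then (1 : ℝ) else 0) - ((T : ℝ) - (g : ℝ) + 1) / (T : ℝ) := by
    intro t; rw [vW, if_neg hgne, hgB]
  simp only [hI, hvW]
  rw [hun, Finset.sum_union hdisj]
  have hpre : ∑ t ∈ Pr, (a t - c / p * b t) *
        ((if g ≤ t then (1 : ℝ) else 0) - ((T : ℝ) - (g : ℝ) + 1) / (T : ℝ))
      = ((∑ t ∈ Pr, a t) - c / p * ∑ t ∈ Pr, b t) *
        (0 - ((T : ℝ) - (g : ℝ) + 1) / (T : ℝ)) := by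
    have h2 : ∀ t ∈ Pr, (a t - c / p * b t) *
          ((if g ≤ t then (1 : ℝ) else 0) - ((T : ℝ) - (g : ℝ) + 1) / (T : ℝ))
        = (a t - c / p * b t) * (0 - ((T : ℝ) - (g : ℝ) + 1) / (T : ℝ)) := by
      intro t ht
      rw [if_neg (by simp only [hPr, Finset.mem_Icc] at ht; omega)]
    rw [Finset.sum_congr rfl h2, ← Finset.sum_mul, Finset.sum_sub_distrib, ← Finset.mul_sum]
  have hpost : ∑ t ∈ Po, (a t - c / p * b t) *
        ((if g ≤ t then (1 : ℝ) else 0) - ((T : ℝ) - (g : ℝ) + 1) / (T : ℝ))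
      = ((∑ t ∈ Po, a t) - c / p * ∑ t ∈ Po, b t) *
        (1 - ((T : ℝ) - (g : ℝ) + 1) / (T : ℝ)) := by
    have h2 : ∀ t ∈ Po, (a t - c / p * b t) *
          ((if g ≤ t then (1 : ℝ) else 0) - ((T : ℝ) - (g : ℝ) + 1) / (T : ℝ))
        = (a t - c / p * b t) * (1 - ((T : ℝ) - (g : ℝ) + 1) / (T : ℝ)) := by
      intro t ht
      rw [if_pos (by simp only [hPo, Finset.mem_Icc] at ht; omega)]
    rw [Finset.sum_congr rfl h2, ← Finset.sum_mul, Finset.sum_sub_distrib, ← Finset.mul_sum]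
  rw [hpre, hpost, hgB, cCov, cExp, cExp, cExp, hZD, hZ]
  rw [show (∫ ω in A, D ω ∂P) = c from rfl]
  have hT0 : (T : ℝ) ≠ 0 := Nat.cast_ne_zero.mpr (by omega)
  have hgR : (2 : ℝ) ≤ (g : ℝ) := by exact_mod_cast hg2
  have hgTR : (g : ℝ) ≤ (T : ℝ) := Nat.cast_le.mpr hgT
  have hal0 : (T : ℝ) - (g : ℝ) + 1 ≠ 0 := by nlinarith
  have hbe0 : (g : ℝ) - 1 ≠ 0 := by nlinarith
  rw [hal, hbe, ← hpdef]
  field_simp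
  ring
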